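/- If X₁ ≤ X₂ ℙ-almost surely, then y₁ ≤ y₂, where for i = 1,2, yᵢ denotes the unique real number satisfying E[φ(Xᵢ + yᵢ)] = yᵢ. In particular, if (L_t)_{t∈[0,T]} is a process with nondecreasing paths, the corresponding fixed points y*_t of y ↦ E[φ(L_t + y)] are nondecreasing in t. -/

import Mathlib

open MeasureTheory Filter Set

lemma aux_integrable {Ω : Type*} [MeasurableSpace Ω] (P : Measure Ω) [IsProbabilityMeasure P]
    (φ : ℝ → ℝ) (hc : Continuous φ) (C : ℝ) (hC : ∀ x : ℝ, |φ x| ≤ C)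
    (X : Ω → ℝ) (hX : Measurable X) (y : ℝ) :
    Integrable (fun ω => φ (X ω + y)) P := by
  refine ⟨(hc.measurable.comp (hX.add_const y)).aestronglyMeasurable, ?_⟩
  exact MeasureTheory.HasFiniteIntegral.of_bounded (C := C)
    (Filter.Eventually.of_forall fun ω => hC _)

/-- **Monotonicity of the fixed points of `y ↦ E[φ(X + y)]`.**
If `φ : ℝ → ℝ` is bounded and differentiable with `φ'(x) ∈ [0,1)` for all `x`, then:
(1) whenever `X₁ ≤ X₂` a.s. and `y₁, y₂` are the (unique) fixed points of
`y ↦ E[φ(Xᵢ + y)]`, one has `y₁ ≤ y₂`; and (2) in particular, for a process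
`(L_t)_{t ∈ [0,T]}` with nondecreasing paths, the fixed points `y*_t` of
`y ↦ E[φ(L_t + y)]` are nondecreasing in `t`. -/
theorem fixed_points_monotone
    {Ω : Type*} [MeasurableSpace Ω] (P : Measure Ω) [IsProbabilityMeasure P]
    (φ : ℝ → ℝ) (hφ_diff : Differentiable ℝ φ)
    (hφ_deriv : ∀ x : ℝ, deriv φ x ∈ Set.Ico (0 : ℝ) 1)
    (hφ_bdd : ∃ C : ℝ, ∀ x : ℝ, |φ x| ≤ C) :
    (∀ X₁ X₂ : Ω → ℝ, Measurable X₁ → Measurable X₂ →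
      (∀ᵐ ω ∂P, X₁ ω ≤ X₂ ω) →
      ∀ y₁ y₂ : ℝ, (∫ ω, φ (X₁ ω + y₁) ∂P = y₁) → (∫ ω, φ (X₂ ω + y₂) ∂P = y₂) →
        y₁ ≤ y₂) ∧
    (∀ T : ℝ, 0 < T → ∀ L : ℝ → Ω → ℝ, (∀ t, Measurable (L t)) →
      (∀ ω, MonotoneOn (fun t => L t ω) (Set.Icc 0 T)) →
      ∀ ystar : ℝ → ℝ, (∀ t ∈ Set.Icc (0 : ℝ) T, ∫ ω, φ (L t ω + ystar t) ∂P = ystar t) →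
        MonotoneOn ystar (Set.Icc 0 T)) := by
  obtain ⟨C, hC⟩ := hφ_bdd
  have hcont : Continuous φ := hφ_diff.continuous
  -- φ is monotone
  have hmono : Monotone φ := by
    apply monotone_of_deriv_nonneg hφ_diff
    intro x; exact (hφ_deriv x).1
  -- x ↦ x - φ x is strictly monotone
  have hg : StrictMono (fun x => x - φ x) := by
    apply strictMono_of_deriv_pos
    intro x
    have hd : HasDerivAt (fun x => x - φ x) (1 - deriv φ x) x :=
      (hasDerivAt_id x).sub (hφ_diff x).hasDerivAt
    rw [hd.deriv]
    linarith [(hφ_deriv x).2]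
  have key : ∀ X₁ X₂ : Ω → ℝ, Measurable X₁ → Measurable X₂ →
      (∀ᵐ ω ∂P, X₁ ω ≤ X₂ ω) →
      ∀ y₁ y₂ : ℝ, (∫ ω, φ (X₁ ω + y₁) ∂P = y₁) → (∫ ω, φ (X₂ ω + y₂) ∂P = y₂) →
        y₁ ≤ y₂ := by
    intro X₁ X₂ hX₁ hX₂ hle y₁ y₂ h₁ h₂
    by_contra hcon
    push_neg at hcon
    have hI1 := aux_integrable P φ hcont C hC X₁ hX₁ y₁
    have hI2 := aux_integrable P φ hcont C hC X₂ hX₂ y₁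
    have hI3 := aux_integrable P φ hcont C hC X₂ hX₂ y₂
    -- step 1 : y₁ ≤ ∫ φ(X₂ + y₁)
    have hI23 : Integrable (fun ω => φ (X₂ ω + y₁) - φ (X₂ ω + y₂)) P := hI2.sub hI3
    have step1 : y₁ ≤ ∫ ω, φ (X₂ ω + y₁) ∂P := by
      have : (∫ ω, φ (X₁ ω + y₁) ∂P) ≤ ∫ ω, φ (X₂ ω + y₁) ∂P := by
        refine integral_mono_ae hI1 hI2 ?_
        filter_upwards [hle] with ω hω
        exact hmono (by linarith)
      linarith [h₁ ▸ this]
    -- step 2 : pointwise strict bound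
    have hpt : ∀ ω, φ (X₂ ω + y₁) - φ (X₂ ω + y₂) < y₁ - y₂ := by
      intro ω
      have := hg (show X₂ ω + y₂ < X₂ ω + y₁ by linarith)
      simp only at this
      linarith
    -- step 3 : integral strict bound
    have hIdiff : Integrable (fun ω => (y₁ - y₂) - (φ (X₂ ω + y₁) - φ (X₂ ω + y₂))) P :=
      (integrable_const _).sub hI23
    have hpos : 0 < ∫ ω, ((y₁ - y₂) - (φ (X₂ ω + y₁) - φ (X₂ ω + y₂))) ∂P := by
      rw [integral_pos_iff_support_of_nonneg_ae
        (Filter.Eventually.of_forall fun ω => by have := hpt ω; simp; linarith) hIdiff]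
      have : Function.support (fun ω => (y₁ - y₂) - (φ (X₂ ω + y₁) - φ (X₂ ω + y₂))) = Set.univ := by
        ext ω; simp only [Function.mem_support, Set.mem_univ, iff_true]
        have := hpt ω; intro h; apply absurd h; intro h'; linarith [sub_eq_zero.mp h']
      rw [this]
      simp
    rw [integral_sub (integrable_const _) hI23, integral_sub hI2 hI3,
      integral_const] at hpos
    simp only [measure_univ, probReal_univ, ENNReal.toReal_one, smul_eq_mul, one_mul] at hpos
    rw [h₂] at hpos
    linarith
  refine ⟨key, ?_⟩
  intro T hT L hLmeas hLmono ystar hfix s hs t ht hst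
  exact key (L s) (L t) (hLmeas s) (hLmeas t)
    (Filter.Eventually.of_forall fun ω => hLmono ω hs ht hst)
    (ystar s) (ystar t) (hfix s hs) (hfix t ht)
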